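/- Let G be the elementary abelian 2-group of order n = 2^r with r ≥ 2, and let m be a positive integer. Then G \ {0} contains a subset of size m whose elements sum to 0 if and only if 3 ≤ m ≤ n-4 or m = n-1. -/

import Mathlib

set_option linter.unusedSectionVars false

open Finset

section helpers

variable {G : Type*} [AddCommGroup G] [Fintype G] [DecidableEq G]

private lemma negSelf (h2g : ∀ g : G, g + g = 0) (x : G) : -x = x :=
  neg_eq_of_add_eq_zero_right (h2g x)

private lemma exists_notMem {s : Finset G} (h : s.card < Fintype.card G) :
    ∃ b : G, b ∉ s := by
  by_contra hc
  push_neg at hc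
  have h2 := Finset.card_le_card (fun x _ => hc x : (univ : Finset G) ⊆ s)
  simp [Finset.card_univ] at h2
  omega

private lemma card_ge_three (h2g : ∀ g : G, g + g = 0) {A : Finset G}
    (h0 : (0 : G) ∉ A) (hs : A.sum id = 0) (hne : A.Nonempty) : 3 ≤ A.card := by
  rcases Nat.lt_or_ge A.card 3 with h | h
  · exfalso
    have h1 : 1 ≤ A.card := Finset.card_pos.mpr hne
    interval_cases hA : A.card
    · obtain ⟨a, rfl⟩ := Finset.card_eq_one.mp hA
      simp only [Finset.sum_singleton, id] at hs
      exact h0 (by simp [hs])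
    · obtain ⟨a, b, hab, rfl⟩ := Finset.card_eq_two.mp hA
      have hsum : a + b = 0 := by simpa [Finset.sum_pair hab] using hs
      have hneg : -a = b := neg_eq_of_add_eq_zero_right hsum
      rw [negSelf h2g a] at hneg
      exact hab hneg
  · exact h

/-- The sum of all elements of `G` is zero. -/
private lemma total_sum_zero (h2g : ∀ g : G, g + g = 0) {r : ℕ} (hr : 2 ≤ r)
    (hn : Fintype.card G = 2 ^ r) : ∑ g : G, g = 0 := by
  have hcard4 : 4 ≤ Fintype.card G := by
    rw [hn]
    calc (4 : ℕ) = 2 ^ 2 := by norm_num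
    _ ≤ 2 ^ r := Nat.pow_le_pow_right (by norm_num) hr
  obtain ⟨t, ht⟩ : ∃ t : G, t ≠ 0 := by
    obtain ⟨t, _, ht⟩ := Finset.exists_mem_ne
      (by rw [Finset.card_univ]; omega : 1 < (univ : Finset G).card) 0
    exact ⟨t, ht⟩
  set φ : G → Finset G := fun x => {x, x + t} with hφ
  -- each fiber is a pair {x₀, x₀ + t}
  have hfib : ∀ x₀ : G, univ.filter (fun y => φ y = φ x₀) = {x₀, x₀ + t} := by
    intro x₀
    ext y
    simp only [Finset.mem_filter, Finset.mem_univ, true_and, Finset.mem_insert,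
      Finset.mem_singleton, hφ]
    constructor
    · intro h
      have : y ∈ ({x₀, x₀ + t} : Finset G) := by
        rw [← h]; simp
      simpa using this
    · rintro (rfl | rfl)
      · rfl
      · ext z
        simp only [Finset.mem_insert, Finset.mem_singleton]
        constructor
        · rintro (rfl | rfl)
          · tauto
          · left
            rw [add_assoc, h2g, add_zero]
        · rintro (rfl | rfl)
          · right; rw [add_assoc, h2g, add_zero]
          · tauto
  have hpairne : ∀ x₀ : G, x₀ ≠ x₀ + t := by
    intro x₀ h
    exact ht (by simpa using h.symm)
  have key := Finset.sum_fiberwise_of_maps_to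
    (fun i (_ : i ∈ (univ : Finset G)) => Finset.mem_image_of_mem φ (Finset.mem_univ i))
    (id : G → G)
  have hfibsum : ∀ s ∈ univ.image φ,
      ∑ i ∈ univ.filter (fun y => φ y = s), id i = t := by
    intro s hs
    obtain ⟨x₀, _, rfl⟩ := Finset.mem_image.mp hs
    rw [hfib x₀, Finset.sum_pair (hpairne x₀)]
    simp only [id]
    rw [← add_assoc, h2g, zero_add]
  have hfibcard : ∀ s ∈ univ.image φ,
      (univ.filter (fun y => φ y = s)).card = 2 := by
    intro s hs
    obtain ⟨x₀, _, rfl⟩ := Finset.mem_image.mp hs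
    rw [hfib x₀, Finset.card_pair (hpairne x₀)]
  -- count fibers
  have hcount : Fintype.card G = 2 * (univ.image φ).card := by
    have := Finset.sum_fiberwise_of_maps_to
      (fun i (_ : i ∈ (univ : Finset G)) => Finset.mem_image_of_mem φ (Finset.mem_univ i))
      (fun _ : G => (1 : ℕ))
    rw [Finset.sum_const, Finset.card_univ, smul_eq_mul, mul_one] at this
    rw [← this, Finset.sum_congr rfl (fun s hs => by
      rw [Finset.sum_const, smul_eq_mul, mul_one, hfibcard s hs])]
    rw [Finset.sum_const, smul_eq_mul, mul_comm]
  have keven : ∃ j, (univ.image φ).card = 2 * j := by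
    have h2r : 2 ^ r = 2 * (2 * 2 ^ (r - 2)) := by
      obtain ⟨k, rfl⟩ : ∃ k, r = k + 2 := ⟨r - 2, by omega⟩
      simp only [Nat.add_sub_cancel]
      ring
    refine ⟨2 ^ (r - 2), ?_⟩
    rw [hn, h2r] at hcount
    omega
  obtain ⟨j, hj⟩ := keven
  calc ∑ g : G, g = ∑ s ∈ univ.image φ, ∑ i ∈ univ.filter (fun y => φ y = s), id i := key.symm
    _ = ∑ s ∈ univ.image φ, t := Finset.sum_congr rfl hfibsum
    _ = (univ.image φ).card • t := Finset.sum_const t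
    _ = (2 * j) • t := by rw [hj]
    _ = j • (t + t) := by rw [mul_comm, mul_smul, two_smul]
    _ = 0 := by rw [h2g, smul_zero]

/-- From a zero-sum set of size `m` (with room to spare), build one of size `m+1`. -/
private lemma step_lemma (h2g : ∀ g : G, g + g = 0) {A : Finset G} (h0 : (0 : G) ∉ A)
    (hs : A.sum id = 0) (hA : 3 ≤ A.card) (hroom : 2 * A.card + 2 ≤ Fintype.card G) :
    ∃ B : Finset G, (0 : G) ∉ B ∧ B.card = A.card + 1 ∧ B.sum id = 0 := by
  obtain ⟨a, ha⟩ : A.Nonempty := Finset.card_pos.mp (by omega)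
  set X : Finset G := insert (0 : G) A with hX
  set Y : Finset G := X.image (a + ·) with hY
  have hXc : X.card = A.card + 1 := Finset.card_insert_of_notMem h0
  have hYc : Y.card ≤ A.card + 1 := le_trans Finset.card_image_le (le_of_eq hXc)
  have hinter : a ∈ X ∩ Y := by
    rw [Finset.mem_inter]
    constructor
    · exact Finset.mem_insert_of_mem ha
    · rw [hY, Finset.mem_image]
      exact ⟨0, Finset.mem_insert_self _ _, by simp⟩
  have hbad : (X ∪ Y).card < Fintype.card G := by
    have h1 := Finset.card_union_add_card_inter X Y
    have h2 : 1 ≤ (X ∩ Y).card := Finset.card_pos.mpr ⟨a, hinter⟩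
    omega
  obtain ⟨b, hb⟩ := exists_notMem hbad
  rw [Finset.mem_union] at hb
  push_neg at hb
  obtain ⟨hbX, hbY⟩ := hb
  have hb0 : b ≠ 0 := fun h => hbX (h ▸ Finset.mem_insert_self _ _)
  have hbA : b ∉ A := fun h => hbX (Finset.mem_insert_of_mem h)
  have habX : a + b ∉ X := by
    intro h
    apply hbY
    rw [hY, Finset.mem_image]
    refine ⟨a + b, h, ?_⟩
    rw [← add_assoc, h2g, zero_add]
  have hab0 : a + b ≠ 0 := fun h => habX (h ▸ Finset.mem_insert_self _ _)
  have habA : a + b ∉ A := fun h => habX (Finset.mem_insert_of_mem h)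
  have hbab : b ≠ a + b := by
    intro h
    have ha0 : a = 0 := right_eq_add.mp h
    exact h0 (ha0 ▸ ha)
  refine ⟨insert b (insert (a + b) (A.erase a)), ?_, ?_, ?_⟩
  · simp only [Finset.mem_insert, Finset.mem_erase]
    push_neg
    exact ⟨fun h => hb0 h.symm, fun h => hab0 h.symm, fun _ => h0⟩
  · have h1 : a + b ∉ A.erase a := fun h => habA (Finset.mem_of_mem_erase h)
    have h2 : b ∉ insert (a + b) (A.erase a) := by
      simp only [Finset.mem_insert]
      push_neg
      exact ⟨hbab, fun h => hbA (Finset.mem_of_mem_erase h)⟩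
    rw [Finset.card_insert_of_notMem h2, Finset.card_insert_of_notMem h1,
      Finset.card_erase_of_mem ha]
    omega
  · have h1 : a + b ∉ A.erase a := fun h => habA (Finset.mem_of_mem_erase h)
    have h2 : b ∉ insert (a + b) (A.erase a) := by
      simp only [Finset.mem_insert]
      push_neg
      exact ⟨hbab, fun h => hbA (Finset.mem_of_mem_erase h)⟩
    rw [Finset.sum_insert h2, Finset.sum_insert h1, Finset.sum_erase_eq_sub ha, hs]
    simp only [id]
    rw [zero_sub, negSelf h2g a]
    have : b + (a + b + a) = (a + a) + (b + b) := by abel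
    rw [this, h2g, h2g, add_zero]

private lemma exists_zs (h2g : ∀ g : G, g + g = 0) (hcard4 : 4 ≤ Fintype.card G) :
    ∀ m : ℕ, 3 ≤ m → 2 * m ≤ Fintype.card G →
      ∃ A : Finset G, (0 : G) ∉ A ∧ A.card = m ∧ A.sum id = 0 := by
  intro m hm
  induction m, hm using Nat.le_induction with
  | base =>
    intro _
    obtain ⟨a, _, ha⟩ := Finset.exists_mem_ne
      (by rw [Finset.card_univ]; omega : 1 < (univ : Finset G).card) 0
    obtain ⟨b, hb⟩ := exists_notMem
      (lt_of_le_of_lt (Finset.card_insert_le _ _)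
        (by simp [Finset.card_singleton]; omega) : ({0, a} : Finset G).card < Fintype.card G)
    simp only [Finset.mem_insert, Finset.mem_singleton] at hb
    push_neg at hb
    obtain ⟨hb0, hba⟩ := hb
    have hab0 : a + b ≠ 0 := by
      intro h
      have := neg_eq_of_add_eq_zero_right h
      rw [negSelf h2g a] at this
      exact hba this.symm
    have haab : a ≠ a + b := fun h => hb0 (left_eq_add.mp h)
    have hbab : b ≠ a + b := fun h => ha (right_eq_add.mp h)
    refine ⟨{a, b, a + b}, ?_, ?_, ?_⟩
    · simp only [Finset.mem_insert, Finset.mem_singleton]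
      push_neg
      exact ⟨fun h => ha h.symm, fun h => hb0 h.symm, fun h => hab0 h.symm⟩
    · rw [Finset.card_insert_of_notMem (by
          simp only [Finset.mem_insert, Finset.mem_singleton]
          push_neg
          exact ⟨fun h => hba h.symm, haab⟩),
        Finset.card_insert_of_notMem (by simpa using hbab), Finset.card_singleton]
    · rw [Finset.sum_insert (by simp only [Finset.mem_insert, Finset.mem_singleton]; push_neg; exact ⟨fun h => hba h.symm, haab⟩),
        Finset.sum_pair hbab]
      simp only [id]
      have hre : a + (b + (a + b)) = (a + a) + (b + b) := by abel
      rw [hre, h2g, h2g, add_zero]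
  | succ m hm3 ih =>
    intro h2m
    obtain ⟨A, h0, hc, hsum⟩ := ih (by omega)
    obtain ⟨B, hB0, hBc, hBs⟩ := step_lemma h2g h0 hsum (hc ▸ hm3) (by omega)
    exact ⟨B, hB0, by omega, hBs⟩

end helpers

theorem stmt15 (G : Type*) [AddCommGroup G] [Fintype G] (r : ℕ) (hr : 2 ≤ r)
    (h2g : ∀ g : G, g + g = 0) (hn : Fintype.card G = 2 ^ r)
    (m : ℕ) (hm : 1 ≤ m) :
    (∃ A : Finset G, (0 : G) ∉ A ∧ A.card = m ∧ A.sum id = 0) ↔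
    ((3 ≤ m ∧ m ≤ Fintype.card G - 4) ∨ m = Fintype.card G - 1) := by
  classical
  have hn4 : 4 ≤ Fintype.card G := by
    rw [hn]
    calc (4 : ℕ) = 2 ^ 2 := by norm_num
    _ ≤ 2 ^ r := Nat.pow_le_pow_right (by norm_num) hr
  have htot : ∑ g : G, g = 0 := total_sum_zero h2g hr hn
  have htot' : ((Finset.univ : Finset G).erase 0).sum id = 0 := by
    rw [Finset.sum_erase _ (by simp : id (0 : G) = 0)]
    simpa using htot
  have hcerase : ((Finset.univ : Finset G).erase 0).card = Fintype.card G - 1 := by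
    rw [Finset.card_erase_of_mem (Finset.mem_univ _), Finset.card_univ]
  constructor
  · rintro ⟨A, h0, hc, hs⟩
    have hsub : A ⊆ (Finset.univ : Finset G).erase 0 := fun x hx =>
      Finset.mem_erase.mpr ⟨fun h => h0 (h ▸ hx), Finset.mem_univ x⟩
    have hle : m ≤ Fintype.card G - 1 := by
      have := Finset.card_le_card hsub
      rw [hcerase, hc] at this
      exact this
    have hm3 : 3 ≤ m := by
      have := card_ge_three h2g h0 hs (Finset.card_pos.mp (by omega))
      omega
    rcases eq_or_lt_of_le hle with heq | hlt
    · right; exact heq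
    · left
      refine ⟨hm3, ?_⟩
      set B := ((Finset.univ : Finset G).erase 0) \ A with hB
      have hBc : B.card = Fintype.card G - 1 - m := by
        rw [hB, Finset.card_sdiff_of_subset hsub, hcerase, hc]
      have hB0 : (0 : G) ∉ B := fun h =>
        Finset.notMem_erase 0 _ (Finset.mem_sdiff.mp h).1
      have hBs : B.sum id = 0 := by
        rw [hB, Finset.sum_sdiff_eq_sub hsub, htot', hs, sub_zero]
      have hBne : B.Nonempty := Finset.card_pos.mp (by omega)
      have := card_ge_three h2g hB0 hBs hBne
      omega
  · rintro (⟨h3, h4⟩ | heq)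
    · rcases le_or_gt (2 * m) (Fintype.card G) with hsmall | hbig
      · exact exists_zs h2g hn4 m h3 hsmall
      · obtain ⟨B, hB0, hBc, hBs⟩ :=
          exists_zs h2g hn4 (Fintype.card G - 1 - m) (by omega) (by omega)
        have hsub : B ⊆ (Finset.univ : Finset G).erase 0 := fun x hx =>
          Finset.mem_erase.mpr ⟨fun h => hB0 (h ▸ hx), Finset.mem_univ x⟩
        refine ⟨((Finset.univ : Finset G).erase 0) \ B, ?_, ?_, ?_⟩
        · exact fun h => Finset.notMem_erase 0 _ (Finset.mem_sdiff.mp h).1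
        · rw [Finset.card_sdiff_of_subset hsub, hcerase, hBc]
          omega
        · rw [Finset.sum_sdiff_eq_sub hsub, htot', hBs, sub_zero]
    · exact ⟨(Finset.univ : Finset G).erase 0, Finset.notMem_erase _ _,
        by rw [hcerase, heq], htot'⟩
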